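/- Let T, T₀ : ℝⁿ → ℝⁿ be linear maps. If T₀ lies in the closure of the similarity orbit S(T) = {A T A⁻¹ : A ∈ GL(n,ℝ)} in M_n(ℝ), then g_T ⇝ g_{T₀}. -/

import Mathlib

open Filter Topology

/-- `bg₀` (a bracket on `W`) is a contraction of `bg` (a bracket on `V`). -/
def IsContractionOf {V W : Type*} [AddCommGroup V] [Module ℝ V]
    [AddCommGroup W] [Module ℝ W] [TopologicalSpace W]
    (bg : V → V → V) (bg₀ : W → W → W) : Prop :=
  ∃ I : Set ℝ, (𝓝[I \ {0}] (0 : ℝ)).NeBot ∧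
    ∃ C : ℝ → (W ≃ₗ[ℝ] V), ∀ x y : W,
      Tendsto (fun r => (C r).symm (bg (C r x) (C r y))) (𝓝[I \ {0}] (0 : ℝ)) (𝓝 (bg₀ x y))

/-- The bracket of the semidirect product Lie algebra `g_T = ℝ ⋉_T ℝⁿ`:
`[(a, v), (b, w)] = (0, a • T w - b • T v)`. -/
noncomputable def gTBracket {n : ℕ} (T : Matrix (Fin n) (Fin n) ℝ) :
    (ℝ × (Fin n → ℝ)) → (ℝ × (Fin n → ℝ)) → (ℝ × (Fin n → ℝ)) :=
  fun x y => (0, x.1 • T.mulVec y.2 - y.1 • T.mulVec x.2)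

/-- The similarity orbit `S(T) = {A T A⁻¹ : A ∈ GL(n, ℝ)}`. -/
def simOrbit {n : ℕ} (T : Matrix (Fin n) (Fin n) ℝ) : Set (Matrix (Fin n) (Fin n) ℝ) :=
  {S | ∃ A : Matrix (Fin n) (Fin n) ℝ, IsUnit A ∧ S = A * T * A⁻¹}

/-- The double cone `C(T) = ⋃_{λ ∈ ℝ} λ • S(T)` generated by the similarity orbit. -/
def doubleCone {n : ℕ} (T : Matrix (Fin n) (Fin n) ℝ) : Set (Matrix (Fin n) (Fin n) ℝ) :=
  {S | ∃ lam : ℝ, ∃ X ∈ simOrbit T, S = lam • X}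

/-- The two brackets are isomorphic as Lie algebras: there is an invertible linear map
intertwining them. -/
def BracketIso {V W : Type*} [AddCommGroup V] [Module ℝ V] [AddCommGroup W] [Module ℝ W]
    (bv : V → V → V) (bw : W → W → W) : Prop :=
  ∃ D : V ≃ₗ[ℝ] W, ∀ x y : V, D (bv x y) = bw (D x) (D y)

/-- If `T₀` lies in the closure of the similarity orbit `S(T)` in `M_n(ℝ)`,
then `g_T ⇝ g_{T₀}`. -/
theorem isContractionOf_of_mem_closure_simOrbit {n : ℕ}
    (T T₀ : Matrix (Fin n) (Fin n) ℝ) (h : T₀ ∈ closure (simOrbit T)) :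
    IsContractionOf (gTBracket T) (gTBracket T₀) := by
  letI : NormedAddCommGroup (Matrix (Fin n) (Fin n) ℝ) := Matrix.normedAddCommGroup
  have hex : ∀ r : ℝ, ∃ A : Matrix (Fin n) (Fin n) ℝ,
      IsUnit A ∧ (r ≠ 0 → dist T₀ (A * T * A⁻¹) < |r|) := by
    intro r
    rcases eq_or_ne r 0 with hr | hr
    · exact ⟨1, isUnit_one, fun h' => absurd hr h'⟩
    · have hpos : (0:ℝ) < |r| := abs_pos.mpr hr
      obtain ⟨S, hS, hd⟩ := Metric.mem_closure_iff.mp h _ hpos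
      obtain ⟨A, hA, rfl⟩ := hS
      exact ⟨A, hA, fun _ => hd⟩
  choose A hAu hAd using hex
  have hinv : ∀ r, Invertible (A r) := fun r => (hAu r).invertible
  have hI : (Set.univ : Set ℝ) \ {0} = {(0:ℝ)}ᶜ := by
    ext x; simp
  refine ⟨Set.univ, ?_, fun r => (LinearEquiv.refl ℝ ℝ).prodCongr
    ((Matrix.toLinearEquiv' (A r) (hinv r)).symm), ?_⟩
  · rw [hI]; infer_instance
  · intro x y
    -- the conjugated matrices converge to T₀
    have hM : Tendsto (fun r => A r * T * (A r)⁻¹) (𝓝[Set.univ \ {0}] (0:ℝ)) (𝓝 T₀) := by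
      refine Metric.tendsto_nhds.mpr ?_
      intro ε hε
      have h1 : ∀ᶠ r : ℝ in 𝓝 0, |r| < ε := by
        have : Tendsto (fun r : ℝ => |r|) (𝓝 0) (𝓝 0) := by
          simpa using (continuous_abs.tendsto (0:ℝ))
        exact this.eventually_lt_const hε
      filter_upwards [eventually_nhdsWithin_of_eventually_nhds h1,
        self_mem_nhdsWithin] with r h1r h2r
      have hr0 : r ≠ 0 := by
        rw [hI] at h2r; exact h2r
      calc dist (A r * T * (A r)⁻¹) T₀ = dist T₀ (A r * T * (A r)⁻¹) := dist_comm _ _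
        _ < |r| := hAd r hr0
        _ < ε := h1r
    -- identify the conjugated bracket
    have key : ∀ r : ℝ,
        ((LinearEquiv.refl ℝ ℝ).prodCongr ((Matrix.toLinearEquiv' (A r) (hinv r)).symm)).symm
          (gTBracket T
            (((LinearEquiv.refl ℝ ℝ).prodCongr ((Matrix.toLinearEquiv' (A r) (hinv r)).symm)) x)
            (((LinearEquiv.refl ℝ ℝ).prodCongr ((Matrix.toLinearEquiv' (A r) (hinv r)).symm)) y))
        = (0, x.1 • (A r * T * (A r)⁻¹).mulVec y.2 - y.1 • (A r * T * (A r)⁻¹).mulVec x.2) := by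
      intro r
      have hinvof : ⅟(A r) = (A r)⁻¹ := Matrix.invOf_eq_nonsing_inv (A r)
      simp only [gTBracket, LinearEquiv.prodCongr_symm, LinearEquiv.prodCongr_apply,
        LinearEquiv.refl_apply, LinearEquiv.symm_symm, Prod.mk.injEq]
      constructor
      · rfl
      · show (A r).mulVec _ = _
        have h1 : ∀ v : Fin n → ℝ, (Matrix.toLinearEquiv' (A r) (hinv r)).symm v
            = (A r)⁻¹.mulVec v := by
          intro v
          have := Matrix.toLinearEquiv'_symm_apply (A r) (hinv r)
          calc (Matrix.toLinearEquiv' (A r) (hinv r)).symm v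
              = ((Matrix.toLinearEquiv' (A r) (hinv r)).symm : Module.End ℝ (Fin n → ℝ)) v := rfl
            _ = Matrix.toLin' (⅟(A r)) v := by rw [this]
            _ = (A r)⁻¹.mulVec v := by rw [hinvof, Matrix.toLin'_apply]
        rw [h1, h1, Matrix.mulVec_sub, Matrix.mulVec_smul, Matrix.mulVec_smul,
          Matrix.mulVec_mulVec, Matrix.mulVec_mulVec, Matrix.mulVec_mulVec,
          Matrix.mulVec_mulVec]
    have hcont : Continuous fun M : Matrix (Fin n) (Fin n) ℝ =>
        x.1 • M.mulVec y.2 - y.1 • M.mulVec x.2 :=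
      ((continuous_id.matrix_mulVec (continuous_const (y := y.2))).const_smul x.1).sub
        ((continuous_id.matrix_mulVec (continuous_const (y := x.2))).const_smul y.1)
    have hmain : Tendsto (fun r => ((0:ℝ),
        x.1 • (A r * T * (A r)⁻¹).mulVec y.2 - y.1 • (A r * T * (A r)⁻¹).mulVec x.2))
        (𝓝[Set.univ \ {0}] (0:ℝ)) (𝓝 ((0:ℝ), x.1 • T₀.mulVec y.2 - y.1 • T₀.mulVec x.2)) :=
      Tendsto.prodMk_nhds tendsto_const_nhds ((hcont.tendsto T₀).comp hM)
    exact Tendsto.congr (fun r => (key r).symm) hmain
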